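/- Let X be an integrable real random variable, β ∈ (0,1), and ε > 0. Then the smoothed CVaR value satisfies |inf_{t∈ℝ} R^ε_{t,β}[X] − CVaR_β[X]| ≤ ε·log 2/(1 − β), where CVaR_β[X] = inf_{t∈ℝ} R_{t,β}[X]. -/

import Mathlib

open MeasureTheory

lemma smoothplus_lb {ε : ℝ} (hε : 0 < ε) (x : ℝ) :
    max x 0 ≤ ε * Real.log (1 + Real.exp (x / ε)) := by
  have hpos : (0 : ℝ) < 1 + Real.exp (x / ε) := by positivity
  have h1 : x / ε ≤ Real.log (1 + Real.exp (x / ε)) := by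
    rw [Real.le_log_iff_exp_le hpos]
    linarith [Real.exp_pos (x / ε)]
  have h2 : (0 : ℝ) ≤ Real.log (1 + Real.exp (x / ε)) :=
    Real.log_nonneg (by linarith [Real.exp_pos (x / ε)])
  refine max_le ?_ (by positivity)
  have := mul_le_mul_of_nonneg_left h1 hε.le
  calc x = ε * (x / ε) := by field_simp
    _ ≤ ε * Real.log (1 + Real.exp (x / ε)) := this

lemma smoothplus_ub {ε : ℝ} (hε : 0 < ε) (x : ℝ) :
    ε * Real.log (1 + Real.exp (x / ε)) ≤ max x 0 + ε * Real.log 2 := by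
  rcases le_or_gt x 0 with hx | hx
  · have hxe : x / ε ≤ 0 := div_nonpos_iff.mpr (Or.inr ⟨hx, hε.le⟩)
    have : Real.exp (x / ε) ≤ 1 := Real.exp_le_one_iff.mpr hxe
    have hlog : Real.log (1 + Real.exp (x / ε)) ≤ Real.log 2 :=
      Real.log_le_log (by positivity) (by linarith)
    have := mul_le_mul_of_nonneg_left hlog hε.le
    have hm : max x 0 = 0 := max_eq_right hx
    linarith
  · have h1 : (1 : ℝ) ≤ Real.exp (x / ε) :=
      Real.one_le_exp (by positivity)
    have hlog : Real.log (1 + Real.exp (x / ε)) ≤ Real.log (2 * Real.exp (x / ε)) :=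
      Real.log_le_log (by positivity) (by linarith)
    have heq : Real.log (2 * Real.exp (x / ε)) = Real.log 2 + x / ε := by
      rw [Real.log_mul two_ne_zero (Real.exp_ne_zero _), Real.log_exp]
    have hm : max x 0 = x := max_eq_left hx.le
    have := mul_le_mul_of_nonneg_left hlog hε.le
    rw [heq, mul_add] at this
    have hxx : ε * (x / ε) = x := by field_simp
    rw [hxx] at this
    linarith

theorem smoothed_CVaR_bias {Ω : Type*} [MeasurableSpace Ω]
    (μ : Measure Ω) [IsProbabilityMeasure μ] (X : Ω → ℝ) (hX : Integrable X μ)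
    (β : ℝ) (hβ : β ∈ Set.Ioo (0 : ℝ) 1) (ε : ℝ) (hε : 0 < ε) :
    |(⨅ t : ℝ, (t + (1 - β)⁻¹ * ∫ ω, ε * Real.log (1 + Real.exp ((X ω - t) / ε)) ∂μ))
      - (⨅ t : ℝ, (t + (1 - β)⁻¹ * ∫ ω, max (X ω - t) 0 ∂μ))| ≤ ε * Real.log 2 / (1 - β) := by
  obtain ⟨hβ0, hβ1⟩ := hβ
  have h1β : (0 : ℝ) < 1 - β := by linarith
  set c : ℝ := (1 - β)⁻¹ with hc
  have hc0 : 0 < c := inv_pos.mpr h1β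
  have hc1 : 1 ≤ c := one_le_inv_iff₀.mpr ⟨h1β, by linarith⟩
  set f : ℝ → ℝ := fun t => t + c * ∫ ω, max (X ω - t) 0 ∂μ with hf
  set g : ℝ → ℝ := fun t => t + c * ∫ ω, ε * Real.log (1 + Real.exp ((X ω - t) / ε)) ∂μ with hg
  -- integrability
  have hmax : ∀ t : ℝ, Integrable (fun ω => max (X ω - t) 0) μ :=
    fun t => (hX.sub (integrable_const t)).pos_part
  have hgi : ∀ t : ℝ,
      Integrable (fun ω => ε * Real.log (1 + Real.exp ((X ω - t) / ε))) μ := by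
    intro t
    have hcont : Continuous fun x : ℝ => ε * Real.log (1 + Real.exp ((x - t) / ε)) := by
      refine continuous_const.mul (Continuous.log ?_ ?_)
      · exact continuous_const.add (Real.continuous_exp.comp
          ((continuous_id.sub continuous_const).div_const ε))
      · intro x; positivity
    have hbd : Integrable (fun ω => max (X ω - t) 0 + ε * Real.log 2) μ := by
      exact (hmax t).add (integrable_const _)
    refine Integrable.mono hbd
      (hcont.comp_aestronglyMeasurable hX.1) (ae_of_all _ fun ω => ?_)
    have h1 := smoothplus_lb hε (X ω - t)
    have h2 := smoothplus_ub hε (X ω - t)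
    have hnn : (0:ℝ) ≤ ε * Real.log (1 + Real.exp ((X ω - t) / ε)) :=
      le_trans (le_max_right _ _) h1
    have hlog2 : (0:ℝ) ≤ Real.log 2 := Real.log_nonneg one_le_two
    rw [Real.norm_eq_abs, Real.norm_eq_abs, abs_of_nonneg hnn,
      abs_of_nonneg (by positivity : (0:ℝ) ≤ max (X ω - t) 0 + ε * Real.log 2)]
    exact h2
  -- pointwise comparisons of f and g
  have hfg : ∀ t, f t ≤ g t := by
    intro t
    have := integral_mono (hmax t) (hgi t) (fun ω => smoothplus_lb hε (X ω - t))
    exact add_le_add (le_refl t) (mul_le_mul_of_nonneg_left this hc0.le)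
  have hgf : ∀ t, g t ≤ f t + c * (ε * Real.log 2) := by
    intro t
    have hbd : Integrable (fun ω => max (X ω - t) 0 + ε * Real.log 2) μ := by
      exact (hmax t).add (integrable_const _)
    have h := integral_mono (hgi t) hbd (fun ω => smoothplus_ub hε (X ω - t))
    rw [integral_add (hmax t) (integrable_const _), integral_const,
      probReal_univ, one_smul] at h
    have := mul_le_mul_of_nonneg_left h hc0.le
    simp only [hf, hg, mul_add]
    linarith
  -- lower bound on f
  have hflb : ∀ t, (∫ ω, X ω ∂μ) ≤ f t := by
    intro t
    have h1 : (∫ ω, X ω ∂μ) - t ≤ ∫ ω, max (X ω - t) 0 ∂μ := by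
      have hsub : Integrable (fun ω => X ω - t) μ := by
        exact hX.sub (integrable_const t)
      have := integral_mono hsub (hmax t) (fun ω => le_max_left (X ω - t) 0)
      rw [integral_sub hX (integrable_const t), integral_const, probReal_univ,
        one_smul] at this
      exact this
    have h2 : (0:ℝ) ≤ ∫ ω, max (X ω - t) 0 ∂μ :=
      integral_nonneg fun ω => le_max_right _ _
    rcases le_or_gt t (∫ ω, X ω ∂μ) with ht | ht
    · have := mul_le_mul_of_nonneg_left h1 hc0.le
      simp only [hf]
      nlinarith
    · have := mul_le_mul_of_nonneg_left h2 hc0.le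
      simp only [hf]
      nlinarith
  have hglb : ∀ t, (∫ ω, X ω ∂μ) ≤ g t := fun t => (hflb t).trans (hfg t)
  have hbf : BddBelow (Set.range f) := ⟨_, Set.forall_mem_range.mpr hflb⟩
  have hbg : BddBelow (Set.range g) := ⟨_, Set.forall_mem_range.mpr hglb⟩
  have hBA : (⨅ t, f t) ≤ ⨅ t, g t := ciInf_mono hbf hfg
  have hAB : (⨅ t, g t) ≤ (⨅ t, f t) + c * (ε * Real.log 2) := by
    rw [← sub_le_iff_le_add]
    refine le_ciInf fun t => ?_
    have h1 : (⨅ t, g t) ≤ g t := ciInf_le hbg t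
    have h2 := hgf t
    linarith
  have hK : ε * Real.log 2 / (1 - β) = c * (ε * Real.log 2) := by
    rw [hc, div_eq_mul_inv]; ring
  have hKnn : (0:ℝ) ≤ c * (ε * Real.log 2) := by
    have : (0:ℝ) ≤ Real.log 2 := Real.log_nonneg one_le_two
    positivity
  rw [hK]
  rw [abs_sub_le_iff]
  constructor <;> linarith
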